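/- Let m ≥ 2 be an integer and β = (2m−2)/m. Suppose C ≥ 0 is a constant such that for every positive integer N and every continuous m-linear form T : (ℝ^N)^m → ℝ (ℝ^N with the sup norm), ( Σ_{j₁=1}^{N} ( ··· ( Σ_{j_{m-1}=1}^{N} ( Σ_{j_m=1}^{N} |T(e_{j₁},...,e_{j_m})|² )^{β/2} ) ··· )^{β/β} )^{1/β} ≤ C‖T‖, i.e. C is valid for the multiple exponent (β,...,β,2). Then C is also valid for the multiple exponent (2,β,...,β), i.e. ( Σ_{j₁=1}^{N} ( Σ_{j₂,...,j_m=1}^{N} |T(e_{j₁},...,e_{j_m})|^{β} )^{2/β} )^{1/2} ≤ C‖T‖ for all N and all such T. -/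

import Mathlib

open Real

/-- The mixed `ℓ_{q₁}(ℓ_{q₂}(···ℓ_{q_m}))`-norm of an array `f` indexed by
`(Fin m → Fin N)`:
`(∑_{j₁} (∑_{j₂} (··· (∑_{j_m} |f(j₁,...,j_m)|^{q_m})^{q_{m-1}/q_m} ···)^{q₂/q₃})^{q₁/q₂})^{1/q₁}`. -/
noncomputable def mixedNorm {N : ℕ} : (m : ℕ) → (Fin m → ℝ) → ((Fin m → Fin N) → ℝ) → ℝ
  | 0, _, f => |f (fun i => i.elim0)|
  | m + 1, q, f =>
      (∑ j : Fin N,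
        (mixedNorm m (fun i => q i.succ) (fun r => f (Fin.cons j r))) ^ (q 0))
        ^ (1 / q 0)

lemma rpow_two_abs (x : ℝ) : |x| ^ (2:ℝ) = x ^ (2:ℝ) := by
  rw [show (2:ℝ) = ((2:ℕ):ℝ) by norm_num, Real.rpow_natCast, Real.rpow_natCast, sq_abs]

lemma rpow_two_nonneg (x : ℝ) : 0 ≤ x ^ (2:ℝ) := by
  rw [← rpow_two_abs]; exact Real.rpow_nonneg (abs_nonneg x) _

lemma mixedNorm_nonneg {N : ℕ} : ∀ (m : ℕ) (q : Fin m → ℝ) (f : (Fin m → Fin N) → ℝ),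
    0 ≤ mixedNorm m q f
  | 0, _, f => abs_nonneg _
  | m + 1, q, f => by
      exact Real.rpow_nonneg (Finset.sum_nonneg fun j _ =>
        Real.rpow_nonneg (mixedNorm_nonneg m _ _) _) _

lemma Lp_sum_le {ι κ : Type*} (s : Finset κ) (t : Finset ι) (F : κ → ι → ℝ)
    (hF : ∀ k j, 0 ≤ F k j) {p : ℝ} (hp : 1 ≤ p) :
    (∑ j ∈ t, (∑ k ∈ s, F k j) ^ p) ^ (1/p) ≤ ∑ k ∈ s, (∑ j ∈ t, F k j ^ p) ^ (1/p) := by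
  classical
  induction s using Finset.cons_induction with
  | empty =>
      simp [Real.zero_rpow (show p ≠ 0 by positivity), Real.zero_rpow (show p⁻¹ ≠ 0 by positivity)]
  | cons a s ha ih =>
      simp only [Finset.sum_cons]
      refine le_trans (Real.Lp_add_le_of_nonneg t hp ?_ ?_) (add_le_add le_rfl ih)
      · exact fun j _ => hF a j
      · exact fun j _ => Finset.sum_nonneg fun k _ => hF k j

lemma mink2 {N : ℕ} {β : ℝ} (hβ1 : 1 ≤ β) (hβ2 : β ≤ 2) (u : Fin N → Fin N → ℝ)
    (hu : ∀ j k, 0 ≤ u j k) :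
    (∑ j : Fin N, ((∑ k : Fin N, u j k ^ β) ^ (1/β)) ^ (2:ℝ)) ^ (1/2:ℝ)
      ≤ (∑ k : Fin N, ((∑ j : Fin N, u j k ^ (2:ℝ)) ^ (1/2:ℝ)) ^ β) ^ (1/β) := by
  have hβ0 : 0 < β := lt_of_lt_of_le one_pos hβ1
  have hp : 1 ≤ 2/β := by rw [le_div_iff₀ hβ0]; linarith
  have key := Lp_sum_le (Finset.univ : Finset (Fin N)) (Finset.univ : Finset (Fin N))
    (fun k j => u j k ^ β) (fun k j => Real.rpow_nonneg (hu j k) β) hp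
  -- rewrite LHS
  have e1 : ∀ j : Fin N, ((∑ k : Fin N, u j k ^ β) ^ (1/β)) ^ (2:ℝ)
      = (∑ k : Fin N, u j k ^ β) ^ (2/β) := by
    intro j
    rw [← Real.rpow_mul (Finset.sum_nonneg fun k _ => Real.rpow_nonneg (hu j k) β)]
    congr 1; ring
  have e2 : ∀ k j : Fin N, (u j k ^ β) ^ (2/β) = u j k ^ (2:ℝ) := by
    intro k j
    rw [← Real.rpow_mul (hu j k), mul_div_cancel₀ 2 (ne_of_gt hβ0)]
  have e3 : ∀ k : Fin N, ((∑ j : Fin N, u j k ^ (2:ℝ)) ^ (1/2:ℝ)) ^ β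
      = (∑ j : Fin N, u j k ^ (2:ℝ)) ^ (1/(2/β)) := by
    intro k
    rw [← Real.rpow_mul (Finset.sum_nonneg fun j _ => rpow_two_nonneg _)]
    congr 1; rw [one_div_div]; ring
  simp only [e1, e3]
  have hL : (∑ j : Fin N, (∑ k : Fin N, u j k ^ β) ^ (2/β)) ^ (1/2:ℝ)
      = ((∑ j : Fin N, (∑ k : Fin N, u j k ^ β) ^ (2/β)) ^ (1/(2/β))) ^ (1/β) := by
    rw [← Real.rpow_mul (Finset.sum_nonneg fun j _ =>
      Real.rpow_nonneg (Finset.sum_nonneg fun k _ => Real.rpow_nonneg (hu j k) β) _)]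
    congr 1
    rw [one_div_div]
    field_simp
  rw [hL]
  refine Real.rpow_le_rpow (Real.rpow_nonneg (Finset.sum_nonneg fun j _ =>
    Real.rpow_nonneg (Finset.sum_nonneg fun k _ => Real.rpow_nonneg (hu j k) β) _) _)
    ?_ (by positivity)
  have := key
  simp only [e2] at this
  exact this

lemma mixed_mink {N : ℕ} {β : ℝ} (hβ1 : 1 ≤ β) (hβ2 : β ≤ 2) :
    ∀ (n : ℕ) (g : Fin N → (Fin n → Fin N) → ℝ),
    (∑ j : Fin N, (mixedNorm n (fun _ => β) (g j)) ^ (2:ℝ)) ^ (1/2:ℝ)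
      ≤ mixedNorm n (fun _ => β) (fun r => (∑ j : Fin N, (g j r) ^ (2:ℝ)) ^ (1/2:ℝ)) := by
  intro n
  induction n with
  | zero =>
      intro g
      simp only [mixedNorm]
      rw [abs_of_nonneg (Real.rpow_nonneg (Finset.sum_nonneg fun j _ => rpow_two_nonneg _) _)]
      refine le_of_eq ?_
      congr 1
      exact Finset.sum_congr rfl fun j _ => rpow_two_abs _
  | succ n ih =>
      intro g
      simp only [mixedNorm]
      calc
        (∑ j : Fin N, ((∑ k : Fin N,
              (mixedNorm n (fun _ => β) (fun r => g j (Fin.cons k r))) ^ β) ^ (1/β)) ^ (2:ℝ))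
            ^ (1/2:ℝ)
            ≤ (∑ k : Fin N, ((∑ j : Fin N,
                (mixedNorm n (fun _ => β) (fun r => g j (Fin.cons k r))) ^ (2:ℝ)) ^ (1/2:ℝ)) ^ β)
                ^ (1/β) := by
              exact mink2 hβ1 hβ2 _ (fun j k => mixedNorm_nonneg _ _ _)
        _ ≤ (∑ k : Fin N, (mixedNorm n (fun _ => β)
                (fun r => (∑ j : Fin N, (g j (Fin.cons k r)) ^ (2:ℝ)) ^ (1/2:ℝ))) ^ β)
                ^ (1/β) := by
              have hβ0 : (0:ℝ) < β := lt_of_lt_of_le one_pos hβ1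
              refine Real.rpow_le_rpow (Finset.sum_nonneg fun k _ => Real.rpow_nonneg
                (Real.rpow_nonneg (Finset.sum_nonneg fun j _ => rpow_two_nonneg _) _) _)
                (Finset.sum_le_sum fun k _ => Real.rpow_le_rpow
                  (Real.rpow_nonneg (Finset.sum_nonneg fun j _ => rpow_two_nonneg _) _)
                  (ih (fun j r => g j (Fin.cons k r))) hβ0.le) (by positivity)

lemma mixedNorm_succ {N : ℕ} (m : ℕ) (q : Fin (m+1) → ℝ) (f : (Fin (m+1) → Fin N) → ℝ) :
    mixedNorm (m+1) q f
      = (∑ j : Fin N,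
          (mixedNorm m (fun i => q i.succ) (fun r => f (Fin.cons j r))) ^ (q 0)) ^ (1 / q 0) :=
  rfl

lemma mixedNorm_snoc {N : ℕ} (β : ℝ) :
    ∀ (n : ℕ) (f : (Fin (n+1) → Fin N) → ℝ),
    mixedNorm (n+1) (fun i => if (i:ℕ) = n then 2 else β) f
      = mixedNorm n (fun _ => β)
          (fun r => (∑ k : Fin N, (f (Fin.snoc r k)) ^ (2:ℝ)) ^ (1/2:ℝ)) := by
  intro n
  induction n with
  | zero =>
      intro f
      rw [mixedNorm_succ]
      have hfun : ∀ j : Fin N,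
          (Fin.cons j (fun i : Fin 0 => i.elim0) : Fin 1 → Fin N)
            = Fin.snoc (fun i : Fin 0 => i.elim0) j := by
        intro j; funext i
        rw [Fin.fin_one_eq_zero i]
        simp [Fin.snoc]
      have h0 : (if ((0 : Fin 1) : ℕ) = 0 then (2:ℝ) else β) = 2 := by norm_num
      simp only [mixedNorm, h0]
      rw [abs_of_nonneg (Real.rpow_nonneg
        (Finset.sum_nonneg fun k _ => rpow_two_nonneg _) _)]
      congr 1
      refine Finset.sum_congr rfl fun j _ => ?_
      rw [hfun j, rpow_two_abs]
  | succ n ih =>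
      intro f
      rw [mixedNorm_succ, mixedNorm_succ]
      beta_reduce
      have h0 : (if ((0 : Fin (n+2)) : ℕ) = n + 1 then (2:ℝ) else β) = β := by
        rw [if_neg]; simp
      have hq : (fun i : Fin (n+1) =>
            if (((i.succ : Fin (n+2))) : ℕ) = n + 1 then (2:ℝ) else β)
          = fun i : Fin (n+1) => if (i : ℕ) = n then (2:ℝ) else β := by
        funext i
        simp only [Fin.val_succ]
        exact if_congr (by omega) rfl rfl
      rw [h0, hq]
      congr 1
      refine Finset.sum_congr rfl fun j _ => ?_
      rw [ih (fun r => f (Fin.cons j r))]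
      congr 1
      apply congrArg
      funext r
      congr 1
      refine Finset.sum_congr rfl fun k _ => ?_
      rw [Fin.cons_snoc_eq_snoc_cons]

/-- **Moving the exponent 2 from the last to the first position.** Let `m ≥ 2`
(written as `m + 2`) and `β = (2m−2)/m`. If `C ≥ 0` is a valid constant for the
multiple exponent `(β,...,β,2)`, i.e. for every positive integer `N` and every
continuous `m`-linear form `T` on `(ℝ^N)^m` (sup norm) the mixed
`ℓ_β(···ℓ_β(ℓ_2))`-norm of the coefficient array of `T` is at most `C‖T‖`, then `C`
is also valid for the multiple exponent `(2,β,...,β)`. -/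
theorem exponent_two_moves_to_front (m : ℕ) (β : ℝ)
    (hβ : β = (2 * ((m : ℝ) + 2) - 2) / ((m : ℝ) + 2))
    (C : ℝ) (hC : 0 ≤ C)
    (h : ∀ N : ℕ, 0 < N →
      ∀ T : ContinuousMultilinearMap ℝ (fun _ : Fin (m + 2) => (Fin N → ℝ)) ℝ,
        mixedNorm (m + 2) (fun i => if (i : ℕ) = m + 1 then 2 else β)
            (fun j => T (fun i => Pi.single (j i) 1))
          ≤ C * ‖T‖) :
    ∀ N : ℕ, 0 < N →
      ∀ T : ContinuousMultilinearMap ℝ (fun _ : Fin (m + 2) => (Fin N → ℝ)) ℝ,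
        mixedNorm (m + 2) (fun i => if (i : ℕ) = 0 then 2 else β)
            (fun j => T (fun i => Pi.single (j i) 1))
          ≤ C * ‖T‖ := by
  have hm2 : (0:ℝ) < (m : ℝ) + 2 := by positivity
  have hm0 : (0:ℝ) ≤ (m : ℝ) := Nat.cast_nonneg m
  have hβ1 : 1 ≤ β := by rw [hβ, le_div_iff₀ hm2]; linarith
  have hβ2 : β ≤ 2 := by rw [hβ, div_le_iff₀ hm2]; linarith
  intro N hN T
  set σ : Fin (m+2) ≃ Fin (m+2) := (finRotate (m+2)).symm with hσ
  have hh := h N hN (ContinuousMultilinearMap.domDomCongr σ T)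
  rw [ContinuousMultilinearMap.norm_domDomCongr] at hh
  rw [mixedNorm_snoc β (m+1)] at hh
  have ha : ∀ (r : Fin (m+1) → Fin N) (k : Fin N),
      (ContinuousMultilinearMap.domDomCongr σ T)
          (fun i => Pi.single ((Fin.snoc r k : Fin (m+2) → Fin N) i) 1)
        = T (fun i => Pi.single ((Fin.cons k r : Fin (m+2) → Fin N) i) 1) := by
    intro r k
    rw [ContinuousMultilinearMap.domDomCongr_apply]
    congr 1
    funext i
    congr 1
    rw [Fin.snoc_eq_cons_rotate, hσ]
    exact congrArg (fun x => (Fin.cons k r : Fin (m+2) → Fin N) x)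
      (Equiv.apply_symm_apply (finRotate (m+2)) i)
  simp only [ha] at hh
  have hqs : (fun i : Fin (m+1) =>
        if ((i.succ : Fin (m+2)) : ℕ) = 0 then (2:ℝ) else β) = fun _ => β := by
    funext i
    rw [if_neg (by simp)]
  calc
    mixedNorm (m + 2) (fun i => if (i : ℕ) = 0 then 2 else β)
        (fun j => T (fun i => Pi.single (j i) 1))
      = (∑ j : Fin N, (mixedNorm (m+1) (fun _ => β)
          (fun r => T (fun i => Pi.single ((Fin.cons j r : Fin (m+2) → Fin N) i) 1))) ^ (2:ℝ)) ^ (1/2:ℝ) := by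
        rw [mixedNorm_succ]
        beta_reduce
        rw [hqs]
        norm_num
    _ ≤ mixedNorm (m+1) (fun _ => β)
          (fun r => (∑ j : Fin N,
            (T (fun i => Pi.single ((Fin.cons j r : Fin (m+2) → Fin N) i) 1)) ^ (2:ℝ)) ^ (1/2:ℝ)) :=
        mixed_mink hβ1 hβ2 (m+1) (fun j r => T (fun i => Pi.single ((Fin.cons j r : Fin (m+2) → Fin N) i) 1))
    _ ≤ C * ‖T‖ := hh
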